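/- arXiv:1303.2370 — 2 statements merged into one kernel-verified Lean document; each statement's English description precedes it below -/
import Mathlib

section
/- For every n ∈ ℕ, the modified Schreier family equals the Schreier family: a finite subset of ℕ belongs to S_n^M if and only if it belongs to S_n. Here (S_n^M)_{n≥0} is defined by the same induction as (S_n)_{n≥0} except that in the inductive step the condition 'max F_i < min F_{i+1} for all i' is replaced by 'F_1, …, F_k are pairwise disjoint'. -/
open Finset

noncomputable section


/-- Minimum of a finite set of naturals (`0` for the empty set). -/
def fmin (E : Finset ℕ) : ℕ := sInf (E : Set ℕ)

/-- Maximum of a finite set of naturals (`0` for the empty set). -/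
def fmax (E : Finset ℕ) : ℕ := E.sup id

/-- The Schreier families `S_n`:  `S_0` consists of singletons and the empty set, and
`S_{n+1}` consists of unions `F_1 ∪ ⋯ ∪ F_k` of successive members of `S_n` with
`k ≤ min F_1` (equivalently, `k ≤ min (F_1 ∪ ⋯ ∪ F_k)`). -/
def Schreier : ℕ → Set (Finset ℕ)
  | 0 => {F | F.card ≤ 1}
  | n + 1 => {F | ∃ (k : ℕ) (G : Fin k → Finset ℕ),
      F = Finset.univ.biUnion G ∧
      (∀ i, G i ∈ Schreier n) ∧
      (∀ i, (G i).Nonempty) ∧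
      (∀ i j : Fin k, i < j → ∀ a ∈ G i, ∀ b ∈ G j, a < b) ∧
      (∀ a ∈ F, k ≤ a)}

/-- The modified Schreier families `S_n^M`: defined as `S_n`, except that in the inductive
step the sets `F_1, …, F_k` are only required to be pairwise disjoint. -/
def SchreierM : ℕ → Set (Finset ℕ)
  | 0 => {F | F.card ≤ 1}
  | n + 1 => {F | ∃ (k : ℕ) (G : Fin k → Finset ℕ),
      F = Finset.univ.biUnion G ∧
      (∀ i, G i ∈ SchreierM n) ∧
      (∀ i, (G i).Nonempty) ∧
      (∀ i j : Fin k, i ≠ j → Disjoint (G i) (G j)) ∧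
      (∀ a ∈ F, k ≤ a)}

namespace SchreierAux

/-- Union of a list of finsets. -/
def U (l : List (Finset ℕ)) : Finset ℕ := l.foldr (· ∪ ·) ∅

@[simp] lemma U_nil : U [] = ∅ := rfl
@[simp] lemma U_cons {A : Finset ℕ} {l : List (Finset ℕ)} : U (A :: l) = A ∪ U l := rfl

lemma mem_U {a : ℕ} : ∀ {l : List (Finset ℕ)}, a ∈ U l ↔ ∃ A ∈ l, a ∈ A
  | [] => by simp
  | B :: l => by simp [mem_U (l := l)]

lemma U_append (l₁ l₂ : List (Finset ℕ)) : U (l₁ ++ l₂) = U l₁ ∪ U l₂ := by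
  ext a
  simp only [mem_U, List.mem_append, Finset.mem_union]
  aesop

lemma U_perm {l₁ l₂ : List (Finset ℕ)} (h : l₁.Perm l₂) : U l₁ = U l₂ := by
  ext a; simp only [mem_U]
  exact ⟨fun ⟨A, hA, ha⟩ => ⟨A, h.mem_iff.mp hA, ha⟩, fun ⟨A, hA, ha⟩ => ⟨A, h.mem_iff.mpr hA, ha⟩⟩

lemma U_map_U (ll : List (List (Finset ℕ))) : U (ll.map U) = U ll.flatten := by
  ext a; simp [mem_U, List.mem_map, List.mem_flatten]; tauto

lemma fmin_mem {A : Finset ℕ} (h : A.Nonempty) : fmin A ∈ A := by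
  have : (A : Set ℕ).Nonempty := by exact_mod_cast h
  exact_mod_cast Nat.sInf_mem this

lemma fmin_le {A : Finset ℕ} {a : ℕ} (h : a ∈ A) : fmin A ≤ a := Nat.sInf_le (by simpa)

lemma fmin_mono {A B : Finset ℕ} (hA : A.Nonempty) (hAB : A ⊆ B) : fmin B ≤ fmin A :=
  fmin_le (hAB (fmin_mem hA))

@[simp] lemma fmin_singleton {x : ℕ} : fmin {x} = x := by
  simp [fmin]

/-- list version of membership in `Schreier (n+1)`. -/
lemma schreier_succ_iff {n : ℕ} {F : Finset ℕ} :
    F ∈ Schreier (n + 1) ↔ ∃ L : List (Finset ℕ),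
      (∀ A ∈ L, A ∈ Schreier n) ∧ (∀ A ∈ L, A.Nonempty) ∧
      L.Pairwise (fun A B => ∀ a ∈ A, ∀ b ∈ B, a < b) ∧
      F = U L ∧ (∀ a ∈ F, L.length ≤ a) := by
  constructor
  · rintro ⟨k, G, hFU, hS, hne, hsucc, hmin⟩
    refine ⟨List.ofFn G, ?_, ?_, ?_, ?_, ?_⟩
    · intro A hA; obtain ⟨i, rfl⟩ := List.mem_ofFn.mp hA; exact hS i
    · intro A hA; obtain ⟨i, rfl⟩ := List.mem_ofFn.mp hA; exact hne i
    · exact List.pairwise_ofFn.mpr hsucc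
    · rw [hFU]; ext a; simp [mem_U, List.mem_ofFn, Finset.mem_biUnion]
    · simpa using hmin
  · rintro ⟨L, hS, hne, hsucc, rfl, hmin⟩
    refine ⟨L.length, fun i => L.get i, ?_, fun i => hS _ (L.get_mem _), fun i => hne _ (L.get_mem _),
      fun i j hij => (List.pairwise_iff_get.mp hsucc) i j hij, hmin⟩
    ext a
    simp only [Finset.mem_biUnion, Finset.mem_univ, true_and, mem_U]
    constructor
    · rintro ⟨A, hA, ha⟩
      obtain ⟨i, rfl⟩ := List.get_of_mem hA
      exact ⟨i, ha⟩
    · rintro ⟨i, ha⟩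
      exact ⟨L.get i, L.get_mem _, ha⟩

lemma count_le_of_sorted {L : List (Finset ℕ)} (hs : L.Pairwise (fun A B => fmin A ≤ fmin B))
    {v j : ℕ} (h : L.countP (fun A => decide (fmin A < v)) ≤ j)
    {A : Finset ℕ} (hA : A ∈ L.drop j) : v ≤ fmin A := by
  by_contra hv
  push_neg at hv
  have hjlen : j < L.length := by
    by_contra hj
    push_neg at hj
    rw [List.drop_eq_nil_of_le hj] at hA
    simp at hA
  have hL : L = L.take j ++ L.drop j := (List.take_append_drop j L).symm
  have hs' : (L.take j ++ L.drop j).Pairwise (fun A B => fmin A ≤ fmin B) := by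
    rw [← hL]; exact hs
  have hp : ∀ B ∈ L.take j, fmin B < v := by
    intro B hB
    have := (List.pairwise_append.mp hs').2.2 B hB A hA
    omega
  have h1 : (L.take j).countP (fun A => decide (fmin A < v)) = j := by
    rw [List.countP_eq_length.mpr (fun B hB => by simpa using hp B hB), List.length_take]
    omega
  have h2 : 0 < (L.drop j).countP (fun A => decide (fmin A < v)) :=
    List.countP_pos_iff.mpr ⟨A, hA, by simpa using hv⟩
  rw [hL, List.countP_append] at h
  omega

/-- split a list into chunks of prescribed sizes -/
def chunk : List ℕ → List (Finset ℕ) → List (List (Finset ℕ))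
  | [], _ => []
  | k :: ks, l => l.take k :: chunk ks (l.drop k)

@[simp] lemma chunk_nil (l : List (Finset ℕ)) : chunk [] l = [] := rfl
@[simp] lemma chunk_cons (k : ℕ) (ks : List ℕ) (l : List (Finset ℕ)) :
    chunk (k :: ks) l = l.take k :: chunk ks (l.drop k) := rfl

lemma chunk_length : ∀ (ks : List ℕ) (l : List (Finset ℕ)), (chunk ks l).length = ks.length
  | [], _ => rfl
  | _ :: ks, l => by simp [chunk_length ks]

lemma chunk_flatten : ∀ (ks : List ℕ) (l : List (Finset ℕ)),
    (chunk ks l).flatten = l.take ks.sum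
  | [], l => by simp
  | k :: ks, l => by
    simp only [chunk_cons, List.flatten_cons, chunk_flatten ks, List.sum_cons]
    rw [List.take_add]

lemma chunk_drop : ∀ (j : ℕ) (ks : List ℕ) (l : List (Finset ℕ)),
    (chunk ks l).drop j = chunk (ks.drop j) (l.drop ((ks.take j).sum))
  | 0, ks, l => by simp
  | j + 1, [], l => by simp
  | j + 1, k :: ks, l => by
    simp only [chunk_cons, List.drop_succ_cons, List.take_succ_cons, List.sum_cons,
      chunk_drop j ks (l.drop k), List.drop_drop]

lemma mem_of_mem_chunk {ks : List ℕ} {l : List (Finset ℕ)} {c : List (Finset ℕ)}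
    (hc : c ∈ chunk ks l) {X : Finset ℕ} (hX : X ∈ c) : X ∈ l := by
  have : X ∈ (chunk ks l).flatten := List.mem_flatten.mpr ⟨c, hc, hX⟩
  rw [chunk_flatten] at this
  exact List.mem_of_mem_take this

lemma chunk_pairwise {R : Finset ℕ → Finset ℕ → Prop} :
    ∀ (ks : List ℕ) (l : List (Finset ℕ)), l.Pairwise R →
      (chunk ks l).Pairwise (fun c d => ∀ x ∈ c, ∀ y ∈ d, R x y)
  | [], l, _ => List.Pairwise.nil
  | k :: ks, l, h => by
    rw [chunk_cons, List.pairwise_cons]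
    have hsplit : (l.take k ++ l.drop k).Pairwise R := by
      rw [List.take_append_drop]; exact h
    refine ⟨?_, chunk_pairwise ks _ (List.Pairwise.sublist (List.drop_sublist k l) h)⟩
    intro d hd x hx y hy
    exact (List.pairwise_append.mp hsplit).2.2 x hx y (mem_of_mem_chunk hd hy)
/-- Key lemma: a disjoint union of members of `Schreier n` (listed with increasing minima)
can be rewritten as a union of the same number of *successive* members of `Schreier n`,
with control on the minima of the tails. -/
lemma key : ∀ (n : ℕ) (L : List (Finset ℕ)),
    (∀ A ∈ L, A ∈ Schreier n) → (∀ A ∈ L, A.Nonempty) →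
    L.Pairwise (fun A B => Disjoint A B) →
    L.Pairwise (fun A B => fmin A ≤ fmin B) →
    ∃ M : List (Finset ℕ),
      M.length = L.length ∧
      (∀ A ∈ M, A ∈ Schreier n) ∧ (∀ A ∈ M, A.Nonempty) ∧
      M.Pairwise (fun A B => ∀ a ∈ A, ∀ b ∈ B, a < b) ∧
      U M = U L ∧
      (∀ v j : ℕ, L.countP (fun A => decide (fmin A < v)) ≤ j →
        ∀ a ∈ U (M.drop j), v ≤ a) := by
  intro n
  induction n with
  | zero =>
    intro L hS hne hdisj hsort
    refine ⟨L, rfl, hS, hne, ?_, rfl, ?_⟩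
    · refine List.Pairwise.imp_of_mem ?_ (hdisj.and hsort)
      intro A B hA hB h
      obtain ⟨hd, hle⟩ := h
      intro a ha b hb
      have hA1 : A.card ≤ 1 := hS A hA
      have hB1 : B.card ≤ 1 := hS B hB
      obtain ⟨x, rfl⟩ := Finset.card_eq_one.mp (le_antisymm hA1 (Finset.card_pos.mpr (hne A hA)))
      obtain ⟨y, rfl⟩ := Finset.card_eq_one.mp (le_antisymm hB1 (Finset.card_pos.mpr (hne B hB)))
      simp only [Finset.mem_singleton] at ha hb
      subst ha; subst hb
      have h1 : a ≤ b := by simpa using hle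
      have h2 : a ≠ b := by
        intro h; subst h
        exact (Finset.disjoint_left.mp hd (Finset.mem_singleton_self a))
          (Finset.mem_singleton_self a)
      omega
    · intro v j hc a ha
      obtain ⟨A, hA, haA⟩ := mem_U.mp ha
      exact le_trans (count_le_of_sorted hsort hc hA) (fmin_le haA)
  | succ n IH =>
    intro L hS hne hdisj hsort
    classical
    have hdec : ∀ A : Finset ℕ, A ∈ L → ∃ d : List (Finset ℕ),
        (∀ X ∈ d, X ∈ Schreier n) ∧ (∀ X ∈ d, X.Nonempty) ∧
        d.Pairwise (fun X Y => ∀ a ∈ X, ∀ b ∈ Y, a < b) ∧ A = U d ∧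
        (∀ a ∈ A, d.length ≤ a) :=
      fun A hA => schreier_succ_iff.mp (hS A hA)
    choose! D hD1 hD2 hD3 hD4 hD5 using hdec
    set P0 : List (Finset ℕ) := (L.map D).flatten with hP0def
    have hmemP0 : ∀ X ∈ P0, ∃ A ∈ L, X ∈ D A := by
      intro X hX
      rw [hP0def, List.mem_flatten] at hX
      obtain ⟨d, hd, hXd⟩ := hX
      rw [List.mem_map] at hd
      obtain ⟨A, hA, rfl⟩ := hd
      exact ⟨A, hA, hXd⟩
    have hsubU : ∀ A ∈ L, ∀ X ∈ D A, X ⊆ A := by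
      intro A hA X hX x hx
      rw [hD4 A hA]
      exact mem_U.mpr ⟨X, hX, hx⟩
    have hP0S : ∀ X ∈ P0, X ∈ Schreier n := by
      intro X hX; obtain ⟨A, hA, hXd⟩ := hmemP0 X hX; exact hD1 A hA X hXd
    have hP0ne : ∀ X ∈ P0, X.Nonempty := by
      intro X hX; obtain ⟨A, hA, hXd⟩ := hmemP0 X hX; exact hD2 A hA X hXd
    have hP0disj : P0.Pairwise (fun X Y => Disjoint X Y) := by
      rw [hP0def, List.pairwise_flatten]
      constructor
      · intro d hd
        rw [List.mem_map] at hd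
        obtain ⟨A, hA, rfl⟩ := hd
        refine (hD3 A hA).imp ?_
        intro X Y h
        refine Finset.disjoint_left.mpr ?_
        intro x hx hy
        exact absurd (h x hx x hy) (lt_irrefl x)
      · rw [List.pairwise_map]
        refine List.Pairwise.imp_of_mem ?_ hdisj
        intro A B hA hB hAB X hX Y hY
        exact hAB.mono (hsubU A hA X hX) (hsubU B hB Y hY)
    haveI : DecidableRel (fun A B : Finset ℕ => fmin A ≤ fmin B) := fun A B => Nat.decLe _ _
    haveI : IsTotal (Finset ℕ) (fun A B => fmin A ≤ fmin B) := ⟨fun A B => Nat.le_total _ _⟩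
    haveI : IsTrans (Finset ℕ) (fun A B => fmin A ≤ fmin B) := ⟨fun A B C h1 h2 => le_trans h1 h2⟩
    set P : List (Finset ℕ) := List.insertionSort (fun A B => fmin A ≤ fmin B) P0 with hPdef
    have hperm : P.Perm P0 := List.perm_insertionSort _ _
    have hPsort : P.Pairwise (fun A B => fmin A ≤ fmin B) := List.pairwise_insertionSort _ _
    obtain ⟨M', hM'len, hM'S, hM'ne, hM'succ, hM'U, hM'inv⟩ :=
      IH P (fun X hX => hP0S X (hperm.mem_iff.mp hX)) (fun X hX => hP0ne X (hperm.mem_iff.mp hX))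
        ((hperm.pairwise_iff (fun h => h.symm)).mpr hP0disj) hPsort
    set ks : List ℕ := L.map (fun A => (D A).length) with hksdef
    have hkslen : ks.length = L.length := by simp [hksdef]
    have hsum : ks.sum = M'.length := by
      rw [hM'len, hperm.length_eq, hP0def, List.length_flatten]
      simp [hksdef, Function.comp_def]
    have hcount : ∀ (v j : ℕ), (∀ A ∈ L.drop j, v ≤ fmin A) →
        P.countP (fun A => decide (fmin A < v)) ≤ (ks.take j).sum := by
      intro v j hv
      rw [hperm.countP_eq]
      have hsplit : P0 = ((L.take j).map D).flatten ++ ((L.drop j).map D).flatten := by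
        rw [hP0def, ← List.flatten_append, ← List.map_append, List.take_append_drop]
      rw [hsplit, List.countP_append]
      have h2 : (((L.drop j).map D).flatten).countP (fun A => decide (fmin A < v)) = 0 := by
        rw [List.countP_eq_zero]
        intro X hX
        rw [List.mem_flatten] at hX
        obtain ⟨d, hd, hXd⟩ := hX
        rw [List.mem_map] at hd
        obtain ⟨A, hAdrop, rfl⟩ := hd
        have hAL : A ∈ L := List.mem_of_mem_drop hAdrop
        have h1 : fmin A ≤ fmin X := fmin_mono (hD2 A hAL X hXd) (hsubU A hAL X hXd)
        have h3 := hv A hAdrop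
        simp only [decide_eq_true_eq]
        omega
      have h1 : (((L.take j).map D).flatten).countP (fun A => decide (fmin A < v))
          ≤ (ks.take j).sum := by
        calc (((L.take j).map D).flatten).countP (fun A => decide (fmin A < v))
            ≤ (((L.take j).map D).flatten).length := List.countP_le_length
          _ = (ks.take j).sum := by
              rw [List.length_flatten, List.map_map, hksdef, ← List.map_take]
              simp [Function.comp_def]
      omega
    set M : List (Finset ℕ) := (chunk ks M').map U with hMdef
    have hMlen : M.length = L.length := by rw [hMdef, List.length_map, chunk_length, hkslen]
    have hdropM : ∀ j, M.drop j = (chunk (ks.drop j) (M'.drop ((ks.take j).sum))).map U := by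
      intro j
      rw [hMdef, ← List.map_drop, chunk_drop]
    have hUdrop : ∀ j, U (M.drop j) = U (M'.drop ((ks.take j).sum)) := by
      intro j
      rw [hdropM j, U_map_U, chunk_flatten]
      congr 1
      apply List.take_of_length_le
      rw [List.length_drop]
      have : (ks.take j).sum + (ks.drop j).sum = ks.sum := by
        rw [← List.sum_append, List.take_append_drop]
      omega
    have hMinv : ∀ v j : ℕ, L.countP (fun A => decide (fmin A < v)) ≤ j →
        ∀ a ∈ U (M.drop j), v ≤ a := by
      intro v j hc a ha
      rw [hUdrop j] at ha
      exact hM'inv v ((ks.take j).sum)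
        (hcount v j (fun A hA => count_le_of_sorted hsort hc hA)) a ha
    have hUM : U M = U L := by
      have h1 : U M = U M' := by simpa using hUdrop 0
      have h2 : U P0 = U L := by
        ext a
        simp only [mem_U]
        constructor
        · rintro ⟨X, hX, haX⟩
          obtain ⟨A, hA, hXd⟩ := hmemP0 X hX
          exact ⟨A, hA, hsubU A hA X hXd haX⟩
        · rintro ⟨A, hA, haA⟩
          have haA' := haA
          rw [hD4 A hA] at haA'
          obtain ⟨X, hX, haX⟩ := mem_U.mp haA'
          refine ⟨X, ?_, haX⟩
          rw [hP0def, List.mem_flatten]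
          exact ⟨D A, List.mem_map_of_mem hA, hX⟩
      rw [h1, hM'U, U_perm hperm, h2]
    have hmember : ∀ C ∈ M, C ∈ Schreier (n + 1) ∧ C.Nonempty := by
      intro C hC
      rw [List.mem_iff_getElem] at hC
      obtain ⟨j, hjM, rfl⟩ := hC
      have hjL : j < L.length := by rwa [hMlen] at hjM
      set A : Finset ℕ := L[j] with hAdef
      have hAL : A ∈ L := List.getElem_mem hjL
      set c : ℕ := (ks.take j).sum with hcdef
      set kj : ℕ := (D A).length with hkjdef
      have hksj : ks.drop j = kj :: ks.drop (j + 1) := by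
        rw [List.drop_eq_getElem_cons (by rw [hkslen]; exact hjL)]
        congr 1
        simp [hksdef, hkjdef, hAdef]
      have hdropj := hdropM j
      rw [hksj, chunk_cons, List.map_cons, List.drop_eq_getElem_cons hjM] at hdropj
      have hMj : M[j] = U ((M'.drop c).take kj) := by
        injection hdropj
      have hkj1 : 1 ≤ kj := by
        rcases Nat.eq_zero_or_pos kj with h0 | h1
        · exfalso
          have hDnil : D A = [] := List.length_eq_zero_iff.mp (by rw [← hkjdef]; exact h0)
          have hAe : A = (∅ : Finset ℕ) := by rw [hD4 A hAL, hDnil]; rfl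
          rcases hne A hAL with ⟨x, hx⟩
          rw [hAe] at hx
          simp at hx
        · exact h1
      have hck : c + kj ≤ M'.length := by
        rw [← hsum]
        have h1 : (ks.take (j + 1)).sum = c + kj := by
          rw [List.sum_take_succ _ _ (by rw [hkslen]; exact hjL)]
          congr 1
          simp [hksdef, hkjdef, hAdef]
        have h2 : (ks.take (j + 1)).sum ≤ ks.sum := by
          conv_rhs => rw [← List.take_append_drop (j + 1) ks]
          rw [List.sum_append]
          omega
        omega
      set T : List (Finset ℕ) := (M'.drop c).take kj with hTdef
      have hTsub : T.Sublist M' := (List.take_sublist _ _).trans (List.drop_sublist _ _)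
      have hTlen : T.length = kj := by
        rw [hTdef, List.length_take, List.length_drop]
        omega
      have hTS : ∀ X ∈ T, X ∈ Schreier n := fun X hX => hM'S X (hTsub.subset hX)
      have hTne' : ∀ X ∈ T, X.Nonempty := fun X hX => hM'ne X (hTsub.subset hX)
      have hTsucc : T.Pairwise (fun X Y => ∀ a ∈ X, ∀ b ∈ Y, a < b) :=
        List.Pairwise.sublist hTsub hM'succ
      have hdropcount : ∀ B ∈ L.drop j, kj ≤ fmin B := by
        have hLdrop : L.drop j = A :: L.drop (j + 1) := List.drop_eq_getElem_cons hjL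
        have hsort' : (L.drop j).Pairwise (fun A B => fmin A ≤ fmin B) :=
          List.Pairwise.sublist (List.drop_sublist _ _) hsort
        rw [hLdrop] at hsort'
        have hkjA : kj ≤ fmin A := hD5 A hAL (fmin A) (fmin_mem (hne A hAL))
        intro B hB
        rw [hLdrop] at hB
        rcases List.mem_cons.mp hB with rfl | hB'
        · exact hkjA
        · exact le_trans hkjA ((List.pairwise_cons.mp hsort').1 B hB')
      have hmincond : ∀ a ∈ U T, kj ≤ a := by
        intro a ha
        have haM : a ∈ U (M'.drop c) := by
          obtain ⟨X, hX, haX⟩ := mem_U.mp ha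
          exact mem_U.mpr ⟨X, List.mem_of_mem_take hX, haX⟩
        exact hM'inv kj c (hcount kj j hdropcount) a haM
      constructor
      · rw [hMj]
        exact schreier_succ_iff.mpr ⟨T, hTS, hTne', hTsucc, rfl,
          fun a ha => hTlen ▸ hmincond a ha⟩
      · rw [hMj]
        have hTne : T ≠ [] := by
          intro h
          rw [h] at hTlen
          simp at hTlen
          omega
        obtain ⟨X, hX⟩ := List.exists_mem_of_ne_nil T hTne
        exact (hTne' X hX).mono (fun x hx => mem_U.mpr ⟨X, hX, hx⟩)
    have hMsucc : M.Pairwise (fun A B => ∀ a ∈ A, ∀ b ∈ B, a < b) := by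
      rw [hMdef, List.pairwise_map]
      refine (chunk_pairwise ks M' hM'succ).imp ?_
      intro cL dL h a ha b hb
      obtain ⟨X, hX, haX⟩ := mem_U.mp ha
      obtain ⟨Y, hY, hbY⟩ := mem_U.mp hb
      exact h X hX Y hY a haX b hbY
    exact ⟨M, hMlen, fun C hC => (hmember C hC).1, fun C hC => (hmember C hC).2,
      hMsucc, hUM, hMinv⟩

end SchreierAux

open SchreierAux

/-- Lemma 1.2 of [ADKM]: for any `n`, the modified Schreier family coincides with the
Schreier family: `S_n^M = S_n`. -/
theorem schreierM_eq_schreier (n : ℕ) (F : Finset ℕ) :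
    F ∈ SchreierM n ↔ F ∈ Schreier n := by
  induction n generalizing F with
  | zero => exact Iff.rfl
  | succ n IH =>
    constructor
    · rintro ⟨k, G, hFU, hS, hne, hdisj, hmin⟩
      classical
      haveI : DecidableRel (fun A B : Finset ℕ => fmin A ≤ fmin B) := fun A B => Nat.decLe _ _
      haveI : IsTotal (Finset ℕ) (fun A B => fmin A ≤ fmin B) := ⟨fun A B => Nat.le_total _ _⟩
      haveI : IsTrans (Finset ℕ) (fun A B => fmin A ≤ fmin B) :=
        ⟨fun A B C h1 h2 => le_trans h1 h2⟩
      set L0 : List (Finset ℕ) := List.ofFn G with hL0def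
      set L : List (Finset ℕ) := List.insertionSort (fun A B => fmin A ≤ fmin B) L0 with hLdef
      have hperm : L.Perm L0 := List.perm_insertionSort _ _
      have hLS : ∀ A ∈ L, A ∈ Schreier n := by
        intro A hA
        obtain ⟨i, rfl⟩ := List.mem_ofFn.mp (hperm.mem_iff.mp hA)
        exact (IH _).mp (hS i)
      have hLne : ∀ A ∈ L, A.Nonempty := by
        intro A hA
        obtain ⟨i, rfl⟩ := List.mem_ofFn.mp (hperm.mem_iff.mp hA)
        exact hne i
      have hLdisj : L.Pairwise (fun A B => Disjoint A B) := by
        refine (hperm.pairwise_iff (fun h => h.symm)).mpr ?_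
        rw [hL0def]
        exact List.pairwise_ofFn.mpr (fun i j hij => hdisj i j (Fin.ne_of_lt hij))
      have hLsort : L.Pairwise (fun A B => fmin A ≤ fmin B) := List.pairwise_insertionSort _ _
      obtain ⟨M, hMlen, hMS, hMne, hMsucc, hMU, _⟩ := key n L hLS hLne hLdisj hLsort
      refine schreier_succ_iff.mpr ⟨M, hMS, hMne, hMsucc, ?_, ?_⟩
      · rw [hFU, hMU, U_perm hperm]
        ext a
        simp only [mem_U, Finset.mem_biUnion, Finset.mem_univ, true_and]
        constructor
        · rintro ⟨i, ha⟩
          exact ⟨G i, by simp [hL0def, List.mem_ofFn], ha⟩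
        · rintro ⟨A, hA, ha⟩
          obtain ⟨i, rfl⟩ := List.mem_ofFn.mp hA
          exact ⟨i, ha⟩
      · intro a ha
        have : M.length = k := by
          rw [hMlen, hperm.length_eq, hL0def, List.length_ofFn]
        rw [this]
        exact hmin a ha
    · rintro ⟨k, G, hFU, hS, hne, hsucc, hmin⟩
      refine ⟨k, G, hFU, fun i => (IH _).mpr (hS i), hne, ?_, hmin⟩
      have hd : ∀ p q : Fin k, p < q → Disjoint (G p) (G q) := by
        intro p q hpq
        refine Finset.disjoint_left.mpr ?_
        intro x hx hy
        exact absurd (hsucc p q hpq x hx x hy) (lt_irrefl x)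
      intro i j hij
      rcases lt_or_gt_of_ne hij with h | h
      · exact hd i j h
      · exact (hd j i h).symm

end
end

section
/- Let n, m ∈ ℕ and let G_1, …, G_k be pairwise disjoint nonempty finite subsets of ℕ such that G_i ∈ S_n for every i and {min G_1, …, min G_k} ∈ S_m. Then G_1 ∪ … ∪ G_k ∈ S_{n+m}. -/
open Finset

noncomputable section


lemma fmin_mem {F : Finset ℕ} (h : F.Nonempty) : fmin F ∈ F := by
  have h' : (F : Set ℕ).Nonempty := by exact_mod_cast h
  exact_mod_cast Nat.sInf_mem h'

lemma fmin_le {F : Finset ℕ} {x : ℕ} (hx : x ∈ F) : fmin F ≤ x :=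
  Nat.sInf_le (by exact_mod_cast hx)

lemma fmin_eq {F : Finset ℕ} {x : ℕ} (hx : x ∈ F) (h : ∀ y ∈ F, x ≤ y) : fmin F = x :=
  le_antisymm (fmin_le hx) (h _ (fmin_mem ⟨x, hx⟩))

lemma empty_mem_schreier (n : ℕ) : (∅ : Finset ℕ) ∈ Schreier n := by
  cases n with
  | zero => simp [Schreier]
  | succ n =>
    refine ⟨0, Fin.elim0, by simp, fun i => i.elim0, fun i => i.elim0,
      fun i => i.elim0, by simp⟩

lemma mem_schreier_one_of_card_le {F : Finset ℕ} (h : F.card ≤ fmin F) :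
    F ∈ Schreier 1 := by
  refine ⟨F.card, fun t => {(F.orderIsoOfFin rfl t : ℕ)}, ?_, ?_, ?_, ?_, ?_⟩
  · ext x
    simp only [Finset.mem_biUnion, Finset.mem_univ, Finset.mem_singleton, true_and]
    constructor
    · intro hx
      obtain ⟨t, ht⟩ := (F.orderIsoOfFin rfl).surjective ⟨x, hx⟩
      exact ⟨t, by rw [ht]⟩
    · rintro ⟨t, rfl⟩; exact (F.orderIsoOfFin rfl t).2
  · intro i; simp [Schreier]
  · intro i; exact ⟨_, Finset.mem_singleton_self _⟩
  · intro i j hij a ha b hb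
    rw [Finset.mem_singleton] at ha hb
    subst ha; subst hb
    exact_mod_cast (F.orderIsoOfFin rfl).strictMono hij
  · intro a ha; exact h.trans (fmin_le ha)

lemma card_le_of_mem_schreier_one {F : Finset ℕ} (h : F ∈ Schreier 1) (hne : F.Nonempty) :
    F.card ≤ fmin F := by
  obtain ⟨k, B, hEq, hB, hBne, hsucc, hk⟩ := h
  have h1 : F.card ≤ k := by
    rw [hEq]
    calc (Finset.univ.biUnion B).card ≤ ∑ l, (B l).card := Finset.card_biUnion_le
    _ ≤ ∑ _l : Fin k, 1 := Finset.sum_le_sum fun l _ => by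
        have := hB l; simpa [Schreier] using this
    _ = k := by simp
  exact h1.trans (hk _ (fmin_mem hne))

lemma spread_mem_schreier {m : ℕ} {F : Finset ℕ} {θ : ℕ → ℕ}
    (hF : F ∈ Schreier m) (hle : ∀ x ∈ F, x ≤ θ x)
    (hmono : ∀ x ∈ F, ∀ y ∈ F, x < y → θ x < θ y) :
    F.image θ ∈ Schreier m := by
  induction m generalizing F with
  | zero =>
    simp only [Schreier, Set.mem_setOf_eq] at hF ⊢
    exact (Finset.card_image_le).trans hF
  | succ m ih =>
    obtain ⟨p, N, hEq, hN, hNne, hsucc, hp⟩ := hF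
    have hsub : ∀ j, N j ⊆ F := by
      intro j; rw [hEq]; exact Finset.subset_biUnion_of_mem N (Finset.mem_univ j)
    refine ⟨p, fun j => (N j).image θ, ?_, ?_, ?_, ?_, ?_⟩
    · rw [hEq, Finset.biUnion_image]  -- maybe wrong name
    · intro j
      exact ih (hN j) (fun x hx => hle x (hsub j hx))
        (fun x hx y hy => hmono x (hsub j hx) y (hsub j hy))
    · intro j; exact (hNne j).image θ
    · intro i j hij a ha b hb
      rw [Finset.mem_image] at ha hb
      obtain ⟨x, hx, rfl⟩ := ha; obtain ⟨y, hy, rfl⟩ := hb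
      exact hmono x (hsub i hx) y (hsub j hy) (hsucc i j hij x hx y hy)
    · intro a ha
      rw [Finset.mem_image] at ha
      obtain ⟨x, hx, rfl⟩ := ha
      rw [hEq, Finset.mem_biUnion] at hx
      obtain ⟨j, _, hxj⟩ := hx
      have hxF : x ∈ F := hsub j hxj
      exact (hp x (hEq ▸ hxF)).trans (hle x hxF)

lemma succ_union_schreier (m : ℕ) : ∀ (I : Finset ℕ) (E : ℕ → Finset ℕ),
    (∀ i ∈ I, (E i).Nonempty) → (∀ i ∈ I, E i ∈ Schreier 1) →
    (∀ i ∈ I, ∀ j ∈ I, i < j → ∀ a ∈ E i, ∀ b ∈ E j, a < b) →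
    (I.image (fun i => fmin (E i)) ∈ Schreier m) →
    I.biUnion E ∈ Schreier (m + 1) := by
  induction m with
  | zero =>
    intro I E hne hS hsucc hM
    rcases I.eq_empty_or_nonempty with rfl | hIne
    · simpa using empty_mem_schreier 1
    · have hinj : Set.InjOn (fun i => fmin (E i)) I := by
        intro i hi j hj hij
        by_contra hne'
        rcases lt_or_gt_of_ne hne' with h | h
        · exact absurd hij (ne_of_lt (hsucc i hi j hj h _ (fmin_mem (hne i hi)) _
            (fmin_mem (hne j hj))))
        · exact absurd hij.symm (ne_of_lt (hsucc j hj i hi h _ (fmin_mem (hne j hj)) _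
            (fmin_mem (hne i hi))))
      have hcard : I.card ≤ 1 := by
        have h1 : (I.image (fun i => fmin (E i))).card ≤ 1 := by
          simpa [Schreier] using hM
        rwa [Finset.card_image_of_injOn hinj] at h1
      obtain ⟨i, rfl⟩ := Finset.card_eq_one.1 (le_antisymm hcard (Finset.card_pos.2 hIne))
      rw [Finset.singleton_biUnion]
      exact hS i (Finset.mem_singleton_self i)
  | succ m ih =>
    intro I E hne hS hsucc hM
    obtain ⟨p, N, hEq, hN, hNne, hNsucc, hp⟩ := hM
    have hNsub : ∀ j, N j ⊆ I.image (fun i => fmin (E i)) := by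
      intro j; rw [hEq]; exact Finset.subset_biUnion_of_mem N (Finset.mem_univ j)
    refine ⟨p, fun j => (I.filter (fun i => fmin (E i) ∈ N j)).biUnion E, ?_, ?_, ?_, ?_, ?_⟩
    · ext a
      simp only [Finset.mem_biUnion, Finset.mem_univ, Finset.mem_filter, true_and]
      constructor
      · rintro ⟨i, hi, ha⟩
        have : fmin (E i) ∈ I.image (fun i => fmin (E i)) :=
          Finset.mem_image_of_mem _ hi
        rw [hEq, Finset.mem_biUnion] at this
        obtain ⟨j, _, hj⟩ := this
        exact ⟨j, i, ⟨hi, hj⟩, ha⟩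
      · rintro ⟨j, i, ⟨hi, _⟩, ha⟩
        exact ⟨i, hi, ha⟩
    · intro j
      apply ih (I.filter (fun i => fmin (E i) ∈ N j)) E
      · exact fun i hi => hne i (Finset.mem_filter.1 hi).1
      · exact fun i hi => hS i (Finset.mem_filter.1 hi).1
      · intro i hi i' hi' h
        exact hsucc i (Finset.mem_filter.1 hi).1 i' (Finset.mem_filter.1 hi').1 h
      · have : (I.filter (fun i => fmin (E i) ∈ N j)).image (fun i => fmin (E i)) = N j := by
          apply Finset.Subset.antisymm
          · intro x hx
            rw [Finset.mem_image] at hx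
            obtain ⟨i, hi, rfl⟩ := hx
            exact (Finset.mem_filter.1 hi).2
          · intro x hx
            have hx' := hNsub j hx
            rw [Finset.mem_image] at hx'
            obtain ⟨i, hi, rfl⟩ := hx'
            exact Finset.mem_image_of_mem _ (Finset.mem_filter.2 ⟨hi, hx⟩)
        rw [this]; exact hN j
    · intro j
      obtain ⟨x, hx⟩ := hNne j
      have hx' := hNsub j hx
      rw [Finset.mem_image] at hx'
      obtain ⟨i, hi, rfl⟩ := hx'
      obtain ⟨a, ha⟩ := hne i hi
      exact ⟨a, Finset.mem_biUnion.2 ⟨i, Finset.mem_filter.2 ⟨hi, hx⟩, ha⟩⟩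
    · intro j j' hjj' a ha b hb
      rw [Finset.mem_biUnion] at ha hb
      obtain ⟨i, hi, hai⟩ := ha
      obtain ⟨i', hi', hbi'⟩ := hb
      rw [Finset.mem_filter] at hi hi'
      have hlt : fmin (E i) < fmin (E i') :=
        hNsucc j j' hjj' _ hi.2 _ hi'.2
      have hii' : i < i' := by
        rcases lt_trichotomy i i' with h | rfl | h
        · exact h
        · exact absurd hlt (lt_irrefl _)
        · exact absurd (hsucc i' hi'.1 i hi.1 h _ (fmin_mem (hne i' hi'.1)) _
            (fmin_mem (hne i hi.1))) (by omega)
      exact hsucc i hi.1 i' hi'.1 hii' a hai b hbi'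
    · intro a ha
      rw [Finset.mem_biUnion] at ha
      obtain ⟨i, hi, hai⟩ := ha
      have h1 : fmin (E i) ∈ I.image (fun i => fmin (E i)) := Finset.mem_image_of_mem _ hi
      exact (hp _ h1).trans (fmin_le hai)

lemma rank_lt_rank {U : Finset ℕ} {x y : ℕ} (hx : x ∈ U) (hxy : x < y) :
    (U.filter (· < x)).card < (U.filter (· < y)).card := by
  apply Finset.card_lt_card
  have hsub : U.filter (· < x) ⊆ U.filter (· < y) := by
    intro a ha
    rw [Finset.mem_filter] at ha ⊢
    exact ⟨ha.1, lt_trans ha.2 hxy⟩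
  refine (Finset.ssubset_iff_of_subset hsub).2 ⟨x, ?_, ?_⟩
  · exact Finset.mem_filter.2 ⟨hx, hxy⟩
  · simp

lemma lt_of_rank_lt {U : Finset ℕ} {x y : ℕ}
    (h : (U.filter (· < x)).card < (U.filter (· < y)).card) : x < y := by
  by_contra hc
  push_neg at hc
  have hsub : U.filter (· < y) ⊆ U.filter (· < x) := by
    intro a ha
    rw [Finset.mem_filter] at ha ⊢
    exact ⟨ha.1, lt_of_lt_of_le ha.2 hc⟩
  exact absurd (Finset.card_le_card hsub) (by omega)

lemma rank_lt_card {U : Finset ℕ} {x : ℕ} (hx : x ∈ U) :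
    (U.filter (· < x)).card < U.card := by
  apply Finset.card_lt_card
  refine (Finset.ssubset_iff_of_subset (Finset.filter_subset _ _)).2 ⟨x, hx, ?_⟩
  simp

lemma exists_rank {U : Finset ℕ} {t : ℕ} (ht : t < U.card) :
    ∃ x ∈ U, (U.filter (· < x)).card = t := by
  have hinj : Set.InjOn (fun x => (U.filter (· < x)).card) U := by
    intro a ha b hb hab
    by_contra h
    rcases lt_or_gt_of_ne h with h' | h'
    · exact absurd hab (ne_of_lt (rank_lt_rank ha h'))
    · exact absurd hab.symm (ne_of_lt (rank_lt_rank hb h'))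
  have himg : U.image (fun x => (U.filter (· < x)).card) = Finset.range U.card := by
    apply Finset.eq_of_subset_of_card_le
    · intro c hc
      rw [Finset.mem_image] at hc
      obtain ⟨x, hx, rfl⟩ := hc
      exact Finset.mem_range.2 (rank_lt_card hx)
    · rw [Finset.card_range, Finset.card_image_of_injOn hinj]
  have : t ∈ U.image (fun x => (U.filter (· < x)).card) := by
    rw [himg]; exact Finset.mem_range.2 ht
  rw [Finset.mem_image] at this
  obtain ⟨x, hx, hxt⟩ := this
  exact ⟨x, hx, hxt⟩

lemma exists_interval (nn : ℕ → ℕ) (I : Finset ℕ) : ∀ t, t < ∑ j ∈ I, nn j →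
    ∃ i ∈ I, (∑ j ∈ I.filter (· < i), nn j) ≤ t ∧
      t < (∑ j ∈ I.filter (· < i), nn j) + nn i := by
  induction I using Finset.strongInduction with
  | _ I ih =>
    intro t ht
    have hIne : I.Nonempty := by
      rcases I.eq_empty_or_nonempty with rfl | h
      · simp at ht
      · exact h
    set M := I.max' hIne with hM
    have hfilter : I.filter (fun j => ¬ j < M) = {M} := by
      ext j
      simp only [Finset.mem_filter, Finset.mem_singleton, not_lt]
      constructor
      · rintro ⟨hj, hMj⟩
        exact le_antisymm (I.le_max' j hj) hMj
      · rintro rfl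
        exact ⟨I.max'_mem hIne, le_refl _⟩
    have hsum : (∑ j ∈ I.filter (· < M), nn j) + nn M = ∑ j ∈ I, nn j := by
      have := Finset.sum_filter_add_sum_filter_not I (· < M) nn
      rw [hfilter] at this
      simpa using this
    by_cases hc : (∑ j ∈ I.filter (· < M), nn j) ≤ t
    · exact ⟨M, I.max'_mem hIne, hc, by omega⟩
    · push_neg at hc
      have hss : I.filter (· < M) ⊂ I := by
        refine Finset.filter_ssubset.2 ⟨M, I.max'_mem hIne, by simp⟩
      obtain ⟨i, hi, h1, h2⟩ := ih _ hss t hc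
      have hiI : i ∈ I := (Finset.mem_filter.1 hi).1
      have hiM : i < M := (Finset.mem_filter.1 hi).2
      have heq : (I.filter (· < M)).filter (· < i) = I.filter (· < i) := by
        ext j
        simp only [Finset.mem_filter]
        constructor
        · rintro ⟨⟨hj, _⟩, hji⟩; exact ⟨hj, hji⟩
        · rintro ⟨hj, hji⟩; exact ⟨⟨hj, lt_trans hji hiM⟩, hji⟩
      rw [heq] at h1 h2
      exact ⟨i, hiI, h1, h2⟩

lemma disjoint_union_schreier_one (m : ℕ) (I : Finset ℕ) (G : ℕ → Finset ℕ)
    (hne : ∀ i ∈ I, (G i).Nonempty) (hS : ∀ i ∈ I, G i ∈ Schreier 1)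
    (hdisj : ∀ i ∈ I, ∀ j ∈ I, i ≠ j → Disjoint (G i) (G j))
    (hfmin : ∀ i ∈ I, fmin (G i) = i) (hI : I ∈ Schreier m) :
    I.biUnion G ∈ Schreier (m + 1) := by
  classical
  set U : Finset ℕ := I.biUnion G with hU
  set r : ℕ → ℕ := fun x => (U.filter (· < x)).card with hr
  set nn : ℕ → ℕ := fun i => (G i).card with hnn
  set s : ℕ → ℕ := fun i => ∑ j ∈ I.filter (· < i), nn j with hs
  set E : ℕ → Finset ℕ := fun i => U.filter (fun x => s i ≤ r x ∧ r x < s i + nn i) with hE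
  have hrlt : ∀ {x y : ℕ}, x ∈ U → x < y → r x < r y := fun hx h => rank_lt_rank hx h
  have hrlt' : ∀ {x y : ℕ}, r x < r y → x < y := fun h => lt_of_rank_lt h
  have hGU : ∀ i ∈ I, G i ⊆ U := fun i hi => Finset.subset_biUnion_of_mem G hi
  have hUcard : U.card = ∑ i ∈ I, nn i :=
    Finset.card_biUnion (fun i hi j hj hij => hdisj i hi j hj hij)
  have hnn1 : ∀ i ∈ I, 1 ≤ nn i := fun i hi => Finset.card_pos.2 (hne i hi)
  have hsle : ∀ i ∈ I, s i + nn i ≤ U.card := by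
    intro i hi
    rw [hUcard]
    have hsi : s i = ∑ j ∈ I.filter (· < i), nn j := rfl
    have hfilter : I.filter (fun j => ¬ j < i) ⊇ {i} := by
      intro j hj
      rw [Finset.mem_singleton] at hj
      subst hj
      exact Finset.mem_filter.2 ⟨hi, by simp⟩
    have h2 : nn i ≤ ∑ j ∈ I.filter (fun j => ¬ j < i), nn j := by
      have := Finset.sum_le_sum_of_subset (f := nn) hfilter
      simpa using this
    have h3 := Finset.sum_filter_add_sum_filter_not I (· < i) nn
    omega
  have hslt : ∀ i ∈ I, ∀ j ∈ I, i < j → s i + nn i ≤ s j := by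
    intro i hi j hj hij
    have hsi : s i = ∑ l ∈ I.filter (· < i), nn l := rfl
    have hsj : s j = ∑ l ∈ I.filter (· < j), nn l := rfl
    have hsub : insert i (I.filter (· < i)) ⊆ I.filter (· < j) := by
      intro a ha
      rw [Finset.mem_insert] at ha
      rcases ha with rfl | ha
      · exact Finset.mem_filter.2 ⟨hi, hij⟩
      · rw [Finset.mem_filter] at ha ⊢
        exact ⟨ha.1, lt_trans ha.2 hij⟩
    have hnotmem : i ∉ I.filter (· < i) := by simp
    have := Finset.sum_le_sum_of_subset (f := nn) hsub
    rw [Finset.sum_insert hnotmem] at this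
    omega
  have hkey : ∀ i ∈ I, (E i).Nonempty ∧ i ≤ fmin (E i) := by
    intro i hi
    have hslt' : s i < U.card := by
      have := hsle i hi; have := hnn1 i hi; omega
    obtain ⟨x, hxU, hxr⟩ := exists_rank hslt'
    have hrx : r x = s i := hxr
    have hxE : x ∈ E i := by
      rw [hE, Finset.mem_filter]
      have := hnn1 i hi
      exact ⟨hxU, by omega, by omega⟩
    have hEne : (E i).Nonempty := ⟨x, hxE⟩
    refine ⟨hEne, ?_⟩
    have hminE : fmin (E i) = x := by
      apply fmin_eq hxE
      intro y hy
      rw [hE, Finset.mem_filter] at hy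
      by_contra hc
      push_neg at hc
      have h1 : r y < r x := hrlt hy.1 hc
      have h2 : s i ≤ r y := hy.2.1
      omega
    rw [hminE]
    by_contra hc
    push_neg at hc
    have hsub : insert x (U.filter (· < x)) ⊆ U.filter (· < i) := by
      intro y hy
      rw [Finset.mem_insert] at hy
      rcases hy with rfl | hy
      · exact Finset.mem_filter.2 ⟨hxU, hc⟩
      · rw [Finset.mem_filter] at hy ⊢
        exact ⟨hy.1, lt_trans hy.2 hc⟩
    have hxnot : x ∉ U.filter (· < x) := by simp
    have hcard1 : (insert x (U.filter (· < x))).card = s i + 1 := by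
      rw [Finset.card_insert_of_notMem hxnot]
      have : (U.filter (· < x)).card = r x := rfl
      omega
    have hsub2 : U.filter (· < i) ⊆ (I.filter (· < i)).biUnion G := by
      intro y hy
      rw [Finset.mem_filter] at hy
      have hyU := hy.1
      rw [hU, Finset.mem_biUnion] at hyU
      obtain ⟨j, hj, hyj⟩ := hyU
      refine Finset.mem_biUnion.2 ⟨j, ?_, hyj⟩
      refine Finset.mem_filter.2 ⟨hj, ?_⟩
      have : fmin (G j) ≤ y := fmin_le hyj
      rw [hfmin j hj] at this
      omega
    have hcard2 : (U.filter (· < i)).card ≤ s i := by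
      calc (U.filter (· < i)).card ≤ ((I.filter (· < i)).biUnion G).card :=
            Finset.card_le_card hsub2
      _ ≤ ∑ j ∈ I.filter (· < i), nn j := Finset.card_biUnion_le
      _ = s i := rfl
    have := Finset.card_le_card hsub
    omega
  have hEne : ∀ i ∈ I, (E i).Nonempty := fun i hi => (hkey i hi).1
  have hEminge : ∀ i ∈ I, i ≤ fmin (E i) := fun i hi => (hkey i hi).2
  have hEcard : ∀ i ∈ I, (E i).card ≤ nn i := by
    intro i hi
    have h1 : (E i).card ≤ (Finset.Ico (s i) (s i + nn i)).card := by
      apply Finset.card_le_card_of_injOn r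
      · intro a ha
        simp only [Finset.mem_coe, hE, Finset.mem_filter] at ha
        exact Finset.mem_Ico.2 ⟨ha.2.1, ha.2.2⟩
      · intro a ha b hb hab
        simp only [Finset.mem_coe, hE, Finset.mem_filter] at ha hb
        by_contra h
        rcases lt_or_gt_of_ne h with h' | h'
        · exact absurd hab (ne_of_lt (hrlt ha.1 h'))
        · exact absurd hab.symm (ne_of_lt (hrlt hb.1 h'))
    rwa [Nat.card_Ico, Nat.add_sub_cancel_left] at h1
  have hEsucc : ∀ i ∈ I, ∀ j ∈ I, i < j → ∀ a ∈ E i, ∀ b ∈ E j, a < b := by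
    intro i hi j hj hij a ha b hb
    rw [hE, Finset.mem_filter] at ha hb
    have h1 : r a < s i + nn i := ha.2.2
    have h2 : s j ≤ r b := hb.2.1
    have h3 := hslt i hi j hj hij
    exact hrlt' (by omega)
  have hES1 : ∀ i ∈ I, E i ∈ Schreier 1 := by
    intro i hi
    apply mem_schreier_one_of_card_le
    have h1 : nn i ≤ i := by
      have := card_le_of_mem_schreier_one (hS i hi) (hne i hi)
      rw [hfmin i hi] at this
      exact this
    have := hEcard i hi
    have := hEminge i hi
    omega
  have hEbu : I.biUnion E = U := by
    apply Finset.Subset.antisymm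
    · intro x hx
      rw [Finset.mem_biUnion] at hx
      obtain ⟨i, hi, hxi⟩ := hx
      rw [hE, Finset.mem_filter] at hxi
      exact hxi.1
    · intro x hx
      have hrx : r x < U.card := rank_lt_card hx
      rw [hUcard] at hrx
      obtain ⟨i, hi, h1, h2⟩ := exists_interval nn I (r x) hrx
      have hsi : s i = ∑ j ∈ I.filter (· < i), nn j := rfl
      refine Finset.mem_biUnion.2 ⟨i, hi, ?_⟩
      rw [hE, Finset.mem_filter]
      exact ⟨hx, by omega, by omega⟩
  have himg : I.image (fun i => fmin (E i)) ∈ Schreier m := by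
    apply spread_mem_schreier hI hEminge
    intro i hi j hj hij
    exact hEsucc i hi j hj hij _ (fmin_mem (hEne i hi)) _ (fmin_mem (hEne j hj))
  have h := succ_union_schreier m I E hEne hES1 hEsucc himg
  rwa [hEbu] at h

/-- minima of a disjoint family of nonempty sets are injective -/
lemma fmin_injective {k : ℕ} (B : Fin k → Finset ℕ) (hne : ∀ l, (B l).Nonempty)
    (hdisj : ∀ l l', l ≠ l' → Disjoint (B l) (B l')) :
    ∀ l l' : Fin k, fmin (B l) = fmin (B l') → l = l' := by
  intro l l' h
  by_contra hc
  have h1 : fmin (B l) ∈ B l := fmin_mem (hne l)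
  have h2 : fmin (B l) ∈ B l' := h ▸ fmin_mem (hne l')
  exact (Finset.disjoint_left.1 (hdisj l l' hc)) h1 h2

lemma reindex {k : ℕ} (B : Fin k → Finset ℕ) (hne : ∀ l, (B l).Nonempty)
    (hdisj : ∀ l l', l ≠ l' → Disjoint (B l) (B l')) :
    (∀ x ∈ Finset.univ.image (fun l => fmin (B l)),
       ∃ l, ((Finset.univ.filter (fun l => fmin (B l) = x)).biUnion B = B l ∧
         fmin (B l) = x)) ∧
    (Finset.univ.image (fun l => fmin (B l))).biUnion
        (fun x => (Finset.univ.filter (fun l => fmin (B l) = x)).biUnion B) =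
      Finset.univ.biUnion B := by
  classical
  have hinj := fmin_injective B hne hdisj
  constructor
  · intro x hx
    rw [Finset.mem_image] at hx
    obtain ⟨l, _, rfl⟩ := hx
    refine ⟨l, ?_, rfl⟩
    have hfl : Finset.univ.filter (fun l' => fmin (B l') = fmin (B l)) = {l} := by
      ext l'
      simp only [Finset.mem_filter, Finset.mem_univ, true_and, Finset.mem_singleton]
      exact ⟨fun h => hinj l' l h, fun h => by rw [h]⟩
    rw [hfl, Finset.singleton_biUnion]
  · ext a
    simp only [Finset.mem_biUnion, Finset.mem_image, Finset.mem_univ, true_and,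
      Finset.mem_filter]
    constructor
    · rintro ⟨x, ⟨l, hl⟩, l', ⟨-, hl'⟩, ha⟩
      exact ⟨l', ha⟩
    · rintro ⟨l, ha⟩
      exact ⟨fmin (B l), ⟨l, rfl⟩, l, rfl, ha⟩

lemma main' (n : ℕ) : ∀ (m : ℕ) (I : Finset ℕ) (G : ℕ → Finset ℕ),
    (∀ i ∈ I, (G i).Nonempty) → (∀ i ∈ I, G i ∈ Schreier n) →
    (∀ i ∈ I, ∀ j ∈ I, i ≠ j → Disjoint (G i) (G j)) →
    (∀ i ∈ I, fmin (G i) = i) → I ∈ Schreier m →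
    I.biUnion G ∈ Schreier (n + m) := by
  induction n with
  | zero =>
    intro m I G hne hS hdisj hfmin hI
    have hGi : ∀ i ∈ I, G i = {i} := by
      intro i hi
      have h1 : (G i).card ≤ 1 := by simpa [Schreier] using hS i hi
      have h2 : (G i).card = 1 := le_antisymm h1 (Finset.card_pos.2 (hne i hi))
      obtain ⟨x, hx⟩ := Finset.card_eq_one.1 h2
      have : fmin (G i) = x := by
        rw [hx]
        exact fmin_eq (Finset.mem_singleton_self x) (fun y hy => le_of_eq
          (Finset.mem_singleton.1 hy).symm)
      rw [hx, ← this, hfmin i hi]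
    have : I.biUnion G = I := by
      ext x
      rw [Finset.mem_biUnion]
      constructor
      · rintro ⟨i, hi, hxi⟩
        rw [hGi i hi, Finset.mem_singleton] at hxi
        exact hxi ▸ hi
      · intro hx
        exact ⟨x, hx, by rw [hGi x hx]; exact Finset.mem_singleton_self x⟩
    rw [this, Nat.zero_add]
    exact hI
  | succ n ih =>
    intro m I G hne hS hdisj hfmin hI
    classical
    -- obtain block decompositions
    have hS' : ∀ i : ℕ, ∃ (kk : ℕ) (B : Fin kk → Finset ℕ), i ∈ I →
        (G i = Finset.univ.biUnion B ∧ (∀ l, B l ∈ Schreier n) ∧ (∀ l, (B l).Nonempty) ∧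
         (∀ l l' : Fin kk, l < l' → ∀ a ∈ B l, ∀ b ∈ B l', a < b) ∧
         (∀ a ∈ G i, kk ≤ a)) := by
      intro i
      by_cases hi : i ∈ I
      · obtain ⟨kk, B, h1, h2, h3, h4, h5⟩ := hS i hi
        exact ⟨kk, B, fun _ => ⟨h1, h2, h3, h4, h5⟩⟩
      · exact ⟨0, Fin.elim0, fun h => absurd h hi⟩
    choose kk B hB using hS'
    -- block disjointness within each i
    have hBdisj : ∀ i ∈ I, ∀ l l' : Fin (kk i), l ≠ l' → Disjoint (B i l) (B i l') := by
      intro i hi l l' hll'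
      obtain ⟨_, _, _, h4, _⟩ := hB i hi
      rw [Finset.disjoint_left]
      intro a hal hal'
      rcases lt_trichotomy l l' with h | rfl | h
      · exact absurd (h4 l l' h a hal a hal') (lt_irrefl a)
      · exact hll' rfl
      · exact absurd (h4 l' l h a hal' a hal) (lt_irrefl a)
    set J : ℕ → Finset ℕ := fun i => Finset.univ.image (fun l => fmin (B i l)) with hJ
    set C : ℕ → ℕ → Finset ℕ :=
      fun i x => (Finset.univ.filter (fun l => fmin (B i l) = x)).biUnion (B i) with hC
    have hRX : ∀ i ∈ I,
        (∀ x ∈ J i, ∃ l, (C i x = B i l ∧ fmin (B i l) = x)) ∧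
        (J i).biUnion (C i) = Finset.univ.biUnion (B i) := by
      intro i hi
      obtain ⟨_, _, h3, _, _⟩ := hB i hi
      exact reindex (B i) h3 (hBdisj i hi)
    have hJsubG : ∀ i ∈ I, J i ⊆ G i := by
      intro i hi x hx
      rw [hJ, Finset.mem_image] at hx
      obtain ⟨l, _, rfl⟩ := hx
      obtain ⟨h1, _, h3, _, _⟩ := hB i hi
      rw [h1]
      exact Finset.mem_biUnion.2 ⟨l, Finset.mem_univ l, fmin_mem (h3 l)⟩
    have hJfmin : ∀ i ∈ I, fmin (J i) = i := by
      intro i hi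
      obtain ⟨h1, _, h3, _, _⟩ := hB i hi
      have hiGi : i ∈ G i := by
        have := fmin_mem (hne i hi); rwa [hfmin i hi] at this
      have : i ∈ G i := hiGi
      rw [h1, Finset.mem_biUnion] at this
      obtain ⟨l, _, hil⟩ := this
      have hge : i ≤ fmin (B i l) := by
        have hmem : fmin (B i l) ∈ G i := by
          rw [h1]; exact Finset.mem_biUnion.2 ⟨l, Finset.mem_univ l, fmin_mem (h3 l)⟩
        have := fmin_le hmem
        rw [hfmin i hi] at this
        exact this
      have hle : fmin (B i l) ≤ i := fmin_le hil
      have heq : fmin (B i l) = i := le_antisymm hle hge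
      apply fmin_eq
      · rw [hJ, Finset.mem_image]
        exact ⟨l, Finset.mem_univ l, heq⟩
      · intro y hy
        have := hJsubG i hi hy
        have h := fmin_le this
        rwa [hfmin i hi] at h
    have hJne : ∀ i ∈ I, (J i).Nonempty := by
      intro i hi
      obtain ⟨h1, _, _, _, _⟩ := hB i hi
      obtain ⟨x, hx⟩ := hne i hi
      rw [h1, Finset.mem_biUnion] at hx
      obtain ⟨l, _, _⟩ := hx
      exact ⟨fmin (B i l), by
        rw [hJ]; exact Finset.mem_image.2 ⟨l, Finset.mem_univ l, rfl⟩⟩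
    have hJS1 : ∀ i ∈ I, J i ∈ Schreier 1 := by
      intro i hi
      apply mem_schreier_one_of_card_le
      obtain ⟨h1, _, _, _, h5⟩ := hB i hi
      have hcard : (J i).card ≤ kk i := by
        rw [hJ]
        exact (Finset.card_image_le).trans (by simp)
      have hiGi : i ∈ G i := by
        have := fmin_mem (hne i hi); rwa [hfmin i hi] at this
      have hki : kk i ≤ i := h5 i hiGi
      rw [hJfmin i hi]
      omega
    have hJdisj : ∀ i ∈ I, ∀ j ∈ I, i ≠ j → Disjoint (J i) (J j) := by
      intro i hi j hj hij
      exact Finset.disjoint_of_subset_left (hJsubG i hi)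
        (Finset.disjoint_of_subset_right (hJsubG j hj) (hdisj i hi j hj hij))
    set JJ : Finset ℕ := I.biUnion J with hJJ
    have hJJS : JJ ∈ Schreier (m + 1) :=
      disjoint_union_schreier_one m I J hJne hJS1 hJdisj hJfmin hI
    set Bl : ℕ → Finset ℕ :=
      fun x => (I.filter (fun i => x ∈ J i)).biUnion (fun i => C i x) with hBl
    -- key: for x ∈ JJ, Bl x is a single block
    have hkey : ∀ x ∈ JJ, ∃ i ∈ I, ∃ l : Fin (kk i),
        Bl x = B i l ∧ fmin (B i l) = x ∧ B i l ⊆ G i := by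
      intro x hx
      rw [hJJ, Finset.mem_biUnion] at hx
      obtain ⟨i, hi, hxi⟩ := hx
      have hfilter : I.filter (fun i' => x ∈ J i') = {i} := by
        ext i'
        simp only [Finset.mem_filter, Finset.mem_singleton]
        constructor
        · rintro ⟨hi', hxi'⟩
          by_contra hc
          exact (Finset.disjoint_left.1 (hJdisj i' hi' i hi hc)) hxi' hxi
        · rintro rfl
          exact ⟨hi, hxi⟩
      have hBlx : Bl x = C i x := by
        simp only [hBl]
        rw [hfilter, Finset.singleton_biUnion]
      obtain ⟨l, hl1, hl2⟩ := (hRX i hi).1 x hxi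
      refine ⟨i, hi, l, by rw [hBlx, hl1], hl2, ?_⟩
      intro a ha
      obtain ⟨h1, _, _, _, _⟩ := hB i hi
      rw [h1]
      exact Finset.mem_biUnion.2 ⟨l, Finset.mem_univ l, ha⟩
    -- apply induction hypothesis
    have hih := ih (m + 1) JJ Bl
      (by
        intro x hx
        obtain ⟨i, hi, l, h1, _, _⟩ := hkey x hx
        obtain ⟨_, _, h3, _, _⟩ := hB i hi
        rw [h1]; exact h3 l)
      (by
        intro x hx
        obtain ⟨i, hi, l, h1, _, _⟩ := hkey x hx
        obtain ⟨_, h2, _, _, _⟩ := hB i hi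
        rw [h1]; exact h2 l)
      (by
        intro x hx y hy hxy
        obtain ⟨i, hi, l, h1, h2, hsub1⟩ := hkey x hx
        obtain ⟨i', hi', l', h1', h2', hsub1'⟩ := hkey y hy
        rw [h1, h1']
        by_cases hii' : i = i'
        · subst hii'
          have hll' : l ≠ l' := by
            rintro rfl
            exact hxy (h2 ▸ h2')
          exact hBdisj i hi l l' hll'
        · exact Finset.disjoint_of_subset_left hsub1
            (Finset.disjoint_of_subset_right hsub1' (hdisj i hi i' hi' hii')))
      (by
        intro x hx
        obtain ⟨i, hi, l, h1, h2, _⟩ := hkey x hx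
        rw [h1, h2])
      hJJS
    have hbu : JJ.biUnion Bl = I.biUnion G := by
      ext a
      constructor
      · intro ha
        rw [Finset.mem_biUnion] at ha
        obtain ⟨x, hx, hax⟩ := ha
        obtain ⟨i, hi, l, h1, _, hsub1⟩ := hkey x hx
        rw [h1] at hax
        exact Finset.mem_biUnion.2 ⟨i, hi, hsub1 hax⟩
      · intro ha
        rw [Finset.mem_biUnion] at ha
        obtain ⟨i, hi, hai⟩ := ha
        obtain ⟨h1, _, h3, _, _⟩ := hB i hi
        rw [h1, Finset.mem_biUnion] at hai
        obtain ⟨l, _, hal⟩ := hai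
        have hxJ : fmin (B i l) ∈ J i := by
          rw [hJ, Finset.mem_image]; exact ⟨l, Finset.mem_univ l, rfl⟩
        have hxJJ : fmin (B i l) ∈ JJ := by
          rw [hJJ, Finset.mem_biUnion]; exact ⟨i, hi, hxJ⟩
        refine Finset.mem_biUnion.2 ⟨fmin (B i l), hxJJ, ?_⟩
        -- a ∈ Bl (fmin (B i l))
        have hfilter2 : i ∈ I.filter (fun i' => fmin (B i l) ∈ J i') :=
          Finset.mem_filter.2 ⟨hi, hxJ⟩
        simp only [hBl]
        refine Finset.mem_biUnion.2 ⟨i, hfilter2, ?_⟩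
        simp only [hC]
        exact Finset.mem_biUnion.2 ⟨l, Finset.mem_filter.2 ⟨Finset.mem_univ l, rfl⟩, hal⟩
      
    rw [hbu] at hih
    have : n + (m + 1) = n + 1 + m := by omega
    rwa [this] at hih

/-- If `G_1, …, G_k` are pairwise disjoint nonempty finite subsets of `ℕ`, each belonging
to `S_n`, and the set of their minima belongs to `S_m`, then their union belongs to
`S_{n+m}`. -/
theorem union_mem_schreier_add (n m k : ℕ) (G : Fin k → Finset ℕ)
    (hne : ∀ i, (G i).Nonempty)
    (hdisj : ∀ i j : Fin k, i ≠ j → Disjoint (G i) (G j))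
    (hS : ∀ i, G i ∈ Schreier n)
    (hmin : (Finset.univ.image fun i => fmin (G i)) ∈ Schreier m) :
    Finset.univ.biUnion G ∈ Schreier (n + m) := by
  classical
  set I : Finset ℕ := Finset.univ.image (fun i => fmin (G i)) with hI
  set G' : ℕ → Finset ℕ :=
    fun x => (Finset.univ.filter (fun i => fmin (G i) = x)).biUnion G with hG'
  obtain ⟨hRX1, hRX2⟩ := reindex G hne hdisj
  have hkey : ∀ x ∈ I, ∃ i, G' x = G i ∧ fmin (G i) = x := by
    intro x hx
    obtain ⟨i, h1, h2⟩ := hRX1 x hx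
    exact ⟨i, h1, h2⟩
  have h := main' n m I G'
    (by intro x hx; obtain ⟨i, h1, _⟩ := hkey x hx; rw [h1]; exact hne i)
    (by intro x hx; obtain ⟨i, h1, _⟩ := hkey x hx; rw [h1]; exact hS i)
    (by
      intro x hx y hy hxy
      obtain ⟨i, h1, h2⟩ := hkey x hx
      obtain ⟨j, h1', h2'⟩ := hkey y hy
      rw [h1, h1']
      refine hdisj i j ?_
      rintro rfl
      exact hxy (h2 ▸ h2'))
    (by intro x hx; obtain ⟨i, h1, h2⟩ := hkey x hx; rw [h1, h2])
    hmin
  have hbu : I.biUnion G' = Finset.univ.biUnion G := hRX2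
  rwa [hbu] at h

end
end
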